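/- Let n, k, l, p, q_L, q_M ∈ ℕ and E, A ∈ ℝ^{l×n}, C ∈ ℝ^{p×n}, B_L ∈ ℝ^{l×q_L}, B_M ∈ ℝ^{l×q_M}, B = [B_L,B_M], L₁ ∈ ℝ^{l×k}, L₂ ∈ ℝ^{p×k}, F ∈ ℝ^{j×n}, J ∈ ℝ^{q_M×n}, Θ ∈ ℝ^{q_M×q_M}, μ ∈ ℝ, δ > 0, 𝒫 ∈ ℝ^{(l+p)×(n+k)}, 𝒦 ∈ ℝ^{(n+k)×(n+k)}. Assume 𝒫ᵀℰ = ℰᵀ𝒫 and 𝒫ᵀ[[0,L₁],[0,L₂]] = 𝒦H. Let I be an interval, η ∈ C¹(I → ℝ^{n+k}), φ = (φ_L, φ_M) ∈ C(I → ℝ^{q_L}×ℝ^{q_M}) with ℰ η̇(t) = 𝒜 η(t) + ℬ φ(t) for all t ∈ I, and suppose that for all t ∈ I: δ(η(t)ᵀ ℱᵀℱ η(t) − φ_L(t)ᵀφ_L(t)) ≥ 0 and ([J,0]η(t))ᵀ Θ φ_M(t) + φ_M(t)ᵀ Θᵀ [J,0]η(t) − μ‖[J,0]η(t)‖² ≥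 0. Then for all t ∈ I, (d/dt)(η(t)ᵀ ℰᵀ𝒫 η(t)) ≤ (η(t), φ(t))ᵀ 𝒬 (η(t), φ(t)). -/

import Mathlib

open Matrix Set Filter

/-- Euclidean norm of a vector in `ℝ^ι`. -/
noncomputable def enorm {ι : Type*} [Fintype ι] (x : ι → ℝ) : ℝ :=
  Real.sqrt (x ⬝ᵥ x)

/-- Spectral (Euclidean operator) norm of a real matrix. -/
noncomputable def matNorm {ι κ : Type*} [Fintype ι] [Fintype κ] [DecidableEq κ]
    (M : Matrix ι κ ℝ) : ℝ :=
  ‖LinearMap.toContinuousLinearMap (Matrix.toEuclideanLin M)‖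

/-- Largest eigenvalue of a (symmetric) real matrix, as the supremum of its eigenvalues. -/
noncomputable def lamMax {q : Type*} [Fintype q] (M : Matrix q q ℝ) : ℝ :=
  sSup {r : ℝ | ∃ v : q → ℝ, v ≠ 0 ∧ M *ᵥ v = r • v}

/-- The first Wong sequence `V^i` of the matrix pencil `sE - A`. -/
def wongV {L N : Type*} [Fintype N] (E A : Matrix L N ℝ) : ℕ → Set (N → ℝ)
  | 0 => Set.univ
  | i + 1 => {x | A *ᵥ x ∈ (fun v => E *ᵥ v) '' wongV E A i}

/-- The first Wong limit `V* = ⋂ V^i` of the matrix pencil `sE - A`. -/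
def wongVstar {L N : Type*} [Fintype N] (E A : Matrix L N ℝ) : Set (N → ℝ) :=
  ⋂ i, wongV E A i

/-- The second Wong sequence `W^i` of the matrix pencil `sE - A`. -/
def wongW {L N : Type*} [Fintype N] (E A : Matrix L N ℝ) : ℕ → Set (N → ℝ)
  | 0 => {0}
  | i + 1 => {x | E *ᵥ x ∈ (fun v => A *ᵥ v) '' wongW E A i}

/-- The second Wong limit `W* = ⋃ W^i` of the matrix pencil `sE - A`. -/
def wongWstar {L N : Type*} [Fintype N] (E A : Matrix L N ℝ) : Set (N → ℝ) :=
  ⋃ i, wongW E A i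

/-- `M <_V 0` : the quadratic form of `M` is negative on `V \ {0}`. -/
def NegDefOn {ι : Type*} [Fintype ι] (M : Matrix ι ι ℝ) (V : Set (ι → ℝ)) : Prop :=
  ∀ v ∈ V, v ≠ 0 → v ⬝ᵥ (M *ᵥ v) < 0

/-- `M >_V 0` : the quadratic form of `M` is positive on `V \ {0}`. -/
def PosDefOn {ι : Type*} [Fintype ι] (M : Matrix ι ι ℝ) (V : Set (ι → ℝ)) : Prop :=
  ∀ v ∈ V, v ≠ 0 → 0 < v ⬝ᵥ (M *ᵥ v)

/-- `M ≥_V 0` : the quadratic form of `M` is nonnegative on `V`. -/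
def PosSemidefOn {ι : Type*} [Fintype ι] (M : Matrix ι ι ℝ) (V : Set (ι → ℝ)) : Prop :=
  ∀ v ∈ V, 0 ≤ v ⬝ᵥ (M *ᵥ v)

/-- Along any trajectory of the error system `ℰη̇ = 𝒜η + ℬφ` satisfying the quadratic
consequences of the Lipschitz and monotonicity conditions, the Lyapunov function candidate
`Ṽ(η) = ηᵀℰᵀ𝒫η` satisfies `(d/dt)Ṽ(η(t)) ≤ (η(t),φ(t))ᵀ𝒬(η(t),φ(t))`. -/
theorem lyapunov_derivative_le_Q_form {n k l p qL qM j : ℕ}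
    (E A : Matrix (Fin l) (Fin n) ℝ) (C : Matrix (Fin p) (Fin n) ℝ)
    (BL : Matrix (Fin l) (Fin qL) ℝ) (BM : Matrix (Fin l) (Fin qM) ℝ)
    (L₁ : Matrix (Fin l) (Fin k) ℝ) (L₂ : Matrix (Fin p) (Fin k) ℝ)
    (F : Matrix (Fin j) (Fin n) ℝ) (J : Matrix (Fin qM) (Fin n) ℝ)
    (Θ : Matrix (Fin qM) (Fin qM) ℝ) (μ δ : ℝ) (hδ : 0 < δ)
    (P : Matrix (Fin l ⊕ Fin p) (Fin n ⊕ Fin k) ℝ)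
    (K : Matrix (Fin n ⊕ Fin k) (Fin n ⊕ Fin k) ℝ)
    -- the block matrices
    (calE : Matrix (Fin l ⊕ Fin p) (Fin n ⊕ Fin k) ℝ)
    (hcalE : calE = Matrix.fromBlocks E 0 0 0)
    (calA : Matrix (Fin l ⊕ Fin p) (Fin n ⊕ Fin k) ℝ)
    (hcalA : calA = Matrix.fromBlocks A L₁ C L₂)
    (calB : Matrix (Fin l ⊕ Fin p) (Fin qL ⊕ Fin qM) ℝ)
    (hcalB : calB = Matrix.fromRows (Matrix.fromCols BL BM) 0)
    (hatA : Matrix (Fin l ⊕ Fin p) (Fin n ⊕ Fin k) ℝ)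
    (hhatA : hatA = Matrix.fromBlocks A 0 C 0)
    (H : Matrix (Fin n ⊕ Fin k) (Fin n ⊕ Fin k) ℝ)
    (hH : H = Matrix.fromBlocks 0 0 0 (1 : Matrix (Fin k) (Fin k) ℝ))
    (calF : Matrix (Fin j) (Fin n ⊕ Fin k) ℝ)
    (hcalF : calF = Matrix.fromCols F 0)
    (hatTheta : Matrix (Fin n ⊕ Fin k) (Fin qL ⊕ Fin qM) ℝ)
    (hhatTheta : hatTheta = Matrix.fromBlocks 0 (Jᵀ * Θ) 0 0)
    (calJ : Matrix (Fin n ⊕ Fin k) (Fin n ⊕ Fin k) ℝ)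
    (hcalJ : calJ = Matrix.fromBlocks (Jᵀ * J) 0 0 0)
    (Lam : Matrix (Fin qL ⊕ Fin qM) (Fin qL ⊕ Fin qM) ℝ)
    (hLam : Lam = Matrix.fromBlocks (1 : Matrix (Fin qL) (Fin qL) ℝ) 0 0 0)
    (Q : Matrix ((Fin n ⊕ Fin k) ⊕ (Fin qL ⊕ Fin qM)) ((Fin n ⊕ Fin k) ⊕ (Fin qL ⊕ Fin qM)) ℝ)
    (hQ : Q = Matrix.fromBlocks
      (hatAᵀ * P + Pᵀ * hatA + Hᵀ * Kᵀ + K * H + δ • (calFᵀ * calF) - μ • calJ)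
      (Pᵀ * calB + hatTheta)
      (calBᵀ * P + hatThetaᵀ)
      (-(δ • Lam)))
    -- structural assumptions on 𝒫 and 𝒦
    (hsym : Pᵀ * calE = calEᵀ * P)
    (hKH : Pᵀ * Matrix.fromBlocks (0 : Matrix (Fin l) (Fin n) ℝ) L₁ 0 L₂ = K * H)
    -- the trajectory
    (I : Set ℝ) (hI : I.OrdConnected)
    (η η' : ℝ → (Fin n ⊕ Fin k) → ℝ)
    (φL : ℝ → Fin qL → ℝ) (φM : ℝ → Fin qM → ℝ)
    (hη : ∀ t ∈ I, HasDerivWithinAt η (η' t) I t)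
    (hη' : ContinuousOn η' I) (hφL : ContinuousOn φL I) (hφM : ContinuousOn φM I)
    (hDAE : ∀ t ∈ I, calE *ᵥ η' t = calA *ᵥ η t + calB *ᵥ Sum.elim (φL t) (φM t))
    -- consequences of the Lipschitz and monotonicity conditions
    (hLipQ : ∀ t ∈ I, 0 ≤ δ * (η t ⬝ᵥ ((calFᵀ * calF) *ᵥ η t) - φL t ⬝ᵥ φL t))
    (hMonQ : ∀ t ∈ I,
      0 ≤ (Matrix.fromCols J (0 : Matrix (Fin qM) (Fin k) ℝ) *ᵥ η t) ⬝ᵥ (Θ *ᵥ φM t)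
        + φM t ⬝ᵥ (Θᵀ *ᵥ (Matrix.fromCols J (0 : Matrix (Fin qM) (Fin k) ℝ) *ᵥ η t))
        - μ * ((Matrix.fromCols J (0 : Matrix (Fin qM) (Fin k) ℝ) *ᵥ η t) ⬝ᵥ
            (Matrix.fromCols J (0 : Matrix (Fin qM) (Fin k) ℝ) *ᵥ η t))) :
    ∀ t ∈ I, ∃ dV : ℝ,
      HasDerivWithinAt (fun s => η s ⬝ᵥ ((calEᵀ * P) *ᵥ η s)) dV I t ∧
      dV ≤ Sum.elim (η t) (Sum.elim (φL t) (φM t)) ⬝ᵥ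
        (Q *ᵥ Sum.elim (η t) (Sum.elim (φL t) (φM t))) := by
  intro t ht
  classical
  set x := η t with hxdef
  set v := η' t with hvdef
  set ψ := Sum.elim (φL t) (φM t) with hψdef
  set M := calEᵀ * P with hMdef
  refine ⟨v ⬝ᵥ (M *ᵥ x) + x ⬝ᵥ (M *ᵥ v), ?_, ?_⟩
  · -- the derivative computation
    have hcoord : ∀ i, HasDerivWithinAt (fun s => η s i) (v i) I t := by
      intro i
      have h := (hη t ht).hasFDerivWithinAt
      have h2 := ((ContinuousLinearMap.proj (R := ℝ)
        (φ := fun _ : (Fin n ⊕ Fin k) => ℝ) i).hasFDerivAt.comp_hasFDerivWithinAt t h).hasDerivWithinAt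
      exact (hasDerivWithinAt_pi.1 (hη t ht)) i
    have hterm : ∀ i : (Fin n ⊕ Fin k), HasDerivWithinAt
        (fun s => η s i * ∑ jj, M i jj * η s jj)
        (v i * ∑ jj, M i jj * x jj + x i * ∑ jj, M i jj * v jj) I t := by
      intro i
      exact (hcoord i).mul (HasDerivWithinAt.fun_sum fun jj _ => (hcoord jj).const_mul _)
    have hsum := HasDerivWithinAt.fun_sum (u := Finset.univ)
      (fun i (_ : i ∈ Finset.univ) => hterm i)
    have hfun : (fun s => η s ⬝ᵥ (M *ᵥ η s))
        = fun s => ∑ i, η s i * ∑ jj, M i jj * η s jj := by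
      funext s
      simp [dotProduct, Matrix.mulVec]
    have hval : v ⬝ᵥ (M *ᵥ x) + x ⬝ᵥ (M *ᵥ v)
        = ∑ i, (v i * ∑ jj, M i jj * x jj + x i * ∑ jj, M i jj * v jj) := by
      simp [dotProduct, Matrix.mulVec, Finset.sum_add_distrib]
    rw [hfun, hval]
    exact hsum
  · -- the inequality
    have hD := hDAE t ht
    have hLip := hLipQ t ht
    have hMon := hMonQ t ht
    set G := Matrix.fromCols J (0 : Matrix (Fin qM) (Fin k) ℝ) with hG
    set w := G *ᵥ x with hw
    -- abbreviations for the scalar quantities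
    set s1 := (P *ᵥ x) ⬝ᵥ (hatA *ᵥ x) with hs1
    set s2 := x ⬝ᵥ ((K * H) *ᵥ x) with hs2
    set s3 := (P *ᵥ x) ⬝ᵥ (calB *ᵥ ψ) with hs3
    set s4 := w ⬝ᵥ (Θ *ᵥ φM t) with hs4
    have hPdot : ∀ u : (Fin l ⊕ Fin p) → ℝ, (P *ᵥ x) ⬝ᵥ u = x ⬝ᵥ (Pᵀ *ᵥ u) := by
      intro u
      rw [← Matrix.vecMul_transpose, ← Matrix.dotProduct_mulVec]
    -- value of the derivative
    have hA1 : v ⬝ᵥ (M *ᵥ x) = (calE *ᵥ v) ⬝ᵥ (P *ᵥ x) := by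
      rw [hMdef, ← Matrix.mulVec_mulVec, Matrix.dotProduct_mulVec, Matrix.vecMul_transpose]
    have hA2 : x ⬝ᵥ (M *ᵥ v) = (P *ᵥ x) ⬝ᵥ (calE *ᵥ v) := by
      rw [← hsym, ← Matrix.mulVec_mulVec, Matrix.dotProduct_mulVec,
        Matrix.vecMul_transpose]
    have hsplit : calA = hatA + Matrix.fromBlocks (0 : Matrix (Fin l) (Fin n) ℝ) L₁ 0 L₂ := by
      rw [hcalA, hhatA, Matrix.fromBlocks_add]
      simp
    have hmid : (P *ᵥ x) ⬝ᵥ ((Matrix.fromBlocks (0 : Matrix (Fin l) (Fin n) ℝ) L₁ 0 L₂) *ᵥ x)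
        = s2 := by
      rw [hPdot, Matrix.mulVec_mulVec, hKH]
    have hdV : v ⬝ᵥ (M *ᵥ x) + x ⬝ᵥ (M *ᵥ v) = 2*s1 + 2*s2 + 2*s3 := by
      rw [hA1, hA2, dotProduct_comm (calE *ᵥ v), hD, hsplit]
      rw [Matrix.add_mulVec, dotProduct_add, dotProduct_add, hmid]
      ring
    -- auxiliary identities for the right-hand side
    have hcalJG : calJ = Gᵀ * G := by
      rw [hcalJ, hG, Matrix.transpose_fromCols, Matrix.fromRows_mul_fromCols]
      simp
    have hJquad : x ⬝ᵥ (calJ *ᵥ x) = w ⬝ᵥ w := by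
      rw [hcalJG, ← Matrix.mulVec_mulVec, Matrix.dotProduct_mulVec, Matrix.vecMul_transpose, hw]
    have hThetaG : hatTheta = Gᵀ * Matrix.fromCols (0 : Matrix (Fin qM) (Fin qL) ℝ) Θ := by
      rw [hhatTheta, hG, Matrix.transpose_fromCols, Matrix.fromRows_mul_fromCols]
      simp
    have hTheta : x ⬝ᵥ (hatTheta *ᵥ ψ) = s4 := by
      rw [hThetaG, ← Matrix.mulVec_mulVec, Matrix.dotProduct_mulVec, Matrix.vecMul_transpose,
        hψdef, Matrix.fromCols_mulVec_sumElim]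
      simp [hs4, hw]
    have hTheta' : ψ ⬝ᵥ (hatThetaᵀ *ᵥ x) = s4 := by
      rw [Matrix.dotProduct_mulVec, Matrix.vecMul_transpose, dotProduct_comm, hTheta]
    have hLamψ : ψ ⬝ᵥ (Lam *ᵥ ψ) = φL t ⬝ᵥ φL t := by
      rw [hLam, hψdef, Matrix.fromBlocks_mulVec]
      simp [sumElim_dotProduct_sumElim]
    have hhatA1 : x ⬝ᵥ ((hatAᵀ * P) *ᵥ x) = s1 := by
      rw [← Matrix.mulVec_mulVec, Matrix.dotProduct_mulVec, Matrix.vecMul_transpose,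
        dotProduct_comm, hs1, hPdot, dotProduct_comm]
    have hhatA2 : x ⬝ᵥ ((Pᵀ * hatA) *ᵥ x) = s1 := by
      rw [← Matrix.mulVec_mulVec, ← hPdot]
    have hKH1 : x ⬝ᵥ ((Hᵀ * Kᵀ) *ᵥ x) = s2 := by
      rw [← Matrix.transpose_mul, Matrix.dotProduct_mulVec, Matrix.vecMul_transpose,
        dotProduct_comm]
    have hcross1 : x ⬝ᵥ ((Pᵀ * calB) *ᵥ ψ) = s3 := by
      rw [← Matrix.mulVec_mulVec, ← hPdot]
    have hcross2 : ψ ⬝ᵥ ((calBᵀ * P) *ᵥ x) = s3 := by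
      rw [← Matrix.mulVec_mulVec, Matrix.dotProduct_mulVec, Matrix.vecMul_transpose,
        dotProduct_comm]
    -- expand the quadratic form
    have hz : Sum.elim x ψ ⬝ᵥ (Q *ᵥ Sum.elim x ψ)
        = x ⬝ᵥ ((hatAᵀ * P + Pᵀ * hatA + Hᵀ * Kᵀ + K * H + δ • (calFᵀ * calF) - μ • calJ) *ᵥ x)
          + x ⬝ᵥ ((Pᵀ * calB + hatTheta) *ᵥ ψ)
          + (ψ ⬝ᵥ ((calBᵀ * P + hatThetaᵀ) *ᵥ x) + ψ ⬝ᵥ ((-(δ • Lam)) *ᵥ ψ)) := by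
      rw [hQ, Matrix.fromBlocks_mulVec]
      simp only [Sum.elim_comp_inl, Sum.elim_comp_inr]
      rw [sumElim_dotProduct_sumElim, dotProduct_add, dotProduct_add]
    have hRHS : Sum.elim x ψ ⬝ᵥ (Q *ᵥ Sum.elim x ψ)
        = 2*s1 + 2*s2 + δ * (x ⬝ᵥ ((calFᵀ * calF) *ᵥ x)) - μ * (w ⬝ᵥ w)
          + 2*s3 + 2*s4 - δ * (φL t ⬝ᵥ φL t) := by
      rw [hz]
      simp only [Matrix.add_mulVec, Matrix.sub_mulVec, Matrix.neg_mulVec,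
        Matrix.smul_mulVec]
      simp only [dotProduct_add, dotProduct_sub, dotProduct_neg,
        dotProduct_smul, smul_eq_mul]
      rw [hhatA1, hhatA2, hKH1, hJquad, hcross1, hTheta, hcross2, hTheta', hLamψ]
      ring
    rw [hdV, hRHS]
    have hMon' : 0 ≤ 2*s4 - μ * (w ⬝ᵥ w) := by
      have h2 : φM t ⬝ᵥ (Θᵀ *ᵥ w) = s4 := by
        rw [Matrix.dotProduct_mulVec, Matrix.vecMul_transpose, dotProduct_comm, hs4]
      rw [h2] at hMon
      linarith [hMon]
    linarith [hLip, hMon']
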